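/- Let b ≥ 1 and d ≥ 1 be integers with gcd(b, d) = 1. Let S_{b,d} = {s ∈ ℕ : s ≥ 1 and there are no k, ℓ ∈ ℕ with s = kb + ℓd}; this set is finite. Let S_{b,d}(t) = ∑_{s ∈ S_{b,d}} t^s ∈ ℤ[t]. Then in ℤ[t] one has the identity (1 − t^b)(1 − t^d) · (1 + (t − 1)·S_{b,d}(t)) = (1 − t^{bd})(1 − t). -/

import Mathlib

open Polynomial Finset

private lemma rep_of_ge (b d : ℕ) (hb : 1 ≤ b) (hd : 1 ≤ d) (hbd : Nat.gcd b d = 1)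
    (n : ℕ) (hn : b * d ≤ n) : ∃ k ℓ : ℕ, n = k * b + ℓ * d := by
  haveI : NeZero d := ⟨by omega⟩
  have hu : IsUnit (b : ZMod d) := (ZMod.isUnit_iff_coprime b d).mpr hbd
  set x : ZMod d := (n : ZMod d) * ↑hu.unit⁻¹ with hx
  set k : ℕ := x.val with hk
  have hkd : k < d := ZMod.val_lt _
  have hkb : k * b ≤ n := by nlinarith [hkd, hb, hn]
  have hcast : ((n - k * b : ℕ) : ZMod d) = 0 := by
    rw [Nat.cast_sub hkb]
    push_cast
    rw [hk, ZMod.natCast_val, ZMod.cast_id, hx]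
    rw [mul_assoc, IsUnit.val_inv_mul]
    ring
  have hdvd : d ∣ n - k * b := (ZMod.natCast_eq_zero_iff _ _).mp hcast
  obtain ⟨ℓ, hℓ⟩ := hdvd
  rw [Nat.mul_comm d ℓ] at hℓ
  exact ⟨k, ℓ, by omega⟩

private lemma mem_iff (b d : ℕ) (hb : 1 ≤ b) (hd : 1 ≤ d) (hbd : Nat.gcd b d = 1) (n : ℕ) :
    ((1 ≤ n ∧ ¬ ∃ k ℓ : ℕ, n = k * b + ℓ * d) ∨ ∃ k, k < d ∧ b * k = n) ↔
    (n < d ∨ ∃ s, (1 ≤ s ∧ ¬ ∃ k ℓ : ℕ, s = k * b + ℓ * d) ∧ s + d = n) := by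
  constructor
  · rintro (⟨h1, hnr⟩ | ⟨k, hkd, hbk⟩)
    · by_cases hnd : n < d
      · exact Or.inl hnd
      · right
        push_neg at hnd
        refine ⟨n - d, ⟨?_, ?_⟩, by omega⟩
        · -- 1 ≤ n - d : else n = d which is representable
          by_contra hc
          have hnd' : n = d := by omega
          exact hnr ⟨0, 1, by omega⟩
        · rintro ⟨k, ℓ, h⟩
          refine hnr ⟨k, ℓ + 1, ?_⟩
          have e : (ℓ + 1) * d = ℓ * d + d := Nat.succ_mul ℓ d
          omega
    · by_cases hnd : n < d
      · exact Or.inl hnd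
      · right
        push_neg at hnd
        refine ⟨n - d, ⟨?_, ?_⟩, by omega⟩
        · -- 1 ≤ n - d : else d = b * k so b = 1 and n = k < d, contradiction
          by_contra hc
          have hnd' : n = d := by omega
          have hbdvd : b ∣ d := ⟨k, by omega⟩
          have hb1 : b = 1 := by
            have := Nat.dvd_gcd (dvd_refl b) hbdvd
            rw [hbd] at this
            exact Nat.eq_one_of_dvd_one this
          subst hb1
          omega
        · rintro ⟨k', ℓ', h'⟩
          -- b*k - d = k'*b + ℓ'*d  with k < d : contradiction
          have hkb : k' * b = b * k' := Nat.mul_comm k' b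
          have hc1 : b * k = k * b := Nat.mul_comm b k
          have h'' : n = k' * b + ℓ' * d + d := by omega
          have hlt : k' < k := by
            by_contra hx
            push_neg at hx
            have : k * b ≤ k' * b := Nat.mul_le_mul_right b hx
            omega
          obtain ⟨m, rfl⟩ : ∃ m, k = k' + m := ⟨k - k', by omega⟩
          have hm1 : 1 ≤ m := by omega
          have e1 : b * (k' + m) = b * k' + b * m := by ring
          have hbm : b * m = ℓ' * d + d := by omega
          have hdvd : d ∣ m * b := by
            refine ⟨ℓ' + 1, ?_⟩
            have c1 : m * b = b * m := Nat.mul_comm m b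
            have c2 : d * (ℓ' + 1) = (ℓ' + 1) * d := Nat.mul_comm d (ℓ' + 1)
            have c3 : (ℓ' + 1) * d = ℓ' * d + d := Nat.succ_mul ℓ' d
            omega
          have hcop : Nat.Coprime d b := Nat.coprime_comm.mp hbd
          have hdm : d ∣ m := hcop.dvd_of_dvd_mul_right hdvd
          have := Nat.le_of_dvd (by omega) hdm
          omega
  · rintro (hnd | ⟨s, ⟨hs1, hsnr⟩, hsd⟩)
    · by_cases hr : ∃ k ℓ : ℕ, n = k * b + ℓ * d
      · right
        obtain ⟨k, ℓ, h⟩ := hr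
        have hℓ0 : ℓ = 0 := by
          by_contra hc
          have : d ≤ ℓ * d := Nat.le_mul_of_pos_left d (by omega)
          omega
        subst hℓ0
        have hk : k ≤ k * b := Nat.le_mul_of_pos_right k (by omega)
        have c1 : b * k = k * b := Nat.mul_comm b k
        exact ⟨k, by omega, by omega⟩
      · by_cases h0 : n = 0
        · exact Or.inr ⟨0, by omega, by omega⟩
        · exact Or.inl ⟨by omega, hr⟩
    · by_cases hr : ∃ k ℓ : ℕ, n = k * b + ℓ * d
      · right
        obtain ⟨k, ℓ, h⟩ := hr
        have hℓ0 : ℓ = 0 := by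
          rcases ℓ with _ | ℓ'
          · rfl
          · exfalso
            apply hsnr
            refine ⟨k, ℓ', ?_⟩
            have e : (ℓ' + 1) * d = ℓ' * d + d := Nat.succ_mul ℓ' d
            omega
        subst hℓ0
        have hkd : k < d := by
          by_contra hk
          push_neg at hk
          apply hsnr
          obtain ⟨m, rfl⟩ : ∃ m, k = d + m := ⟨k - d, by omega⟩
          obtain ⟨c, rfl⟩ : ∃ c, b = c + 1 := ⟨b - 1, by omega⟩
          refine ⟨m, c, ?_⟩
          have e : (d + m) * (c + 1) = m * (c + 1) + c * d + d := by ring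
          omega
        have c1 : b * k = k * b := Nat.mul_comm b k
        exact ⟨k, hkd, by omega⟩
      · exact Or.inl ⟨by omega, hr⟩

/-- **Lemma (Sylvester coin polynomial identity).**
For coprime positive integers `b, d`, the set `S_{b,d}` of positive integers not
representable as `kb + ℓd` with `k, ℓ ∈ ℕ` is finite, and its generating polynomial
`S_{b,d}(t) = ∑_{s ∈ S_{b,d}} t^s` satisfies
`(1 - t^b)(1 - t^d)(1 + (t-1)·S_{b,d}(t)) = (1 - t^{bd})(1 - t)` in `ℤ[t]`. -/
theorem stmt_15 (b d : ℕ) (hb : 1 ≤ b) (hd : 1 ≤ d) (hbd : Nat.gcd b d = 1) :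
    ∃ hfin : {s : ℕ | 1 ≤ s ∧ ¬ ∃ k ℓ : ℕ, s = k * b + ℓ * d}.Finite,
      (1 - (X : Polynomial ℤ) ^ b) * (1 - X ^ d) *
          (1 + (X - 1) * ∑ s ∈ hfin.toFinset, X ^ s) =
        (1 - X ^ (b * d)) * (1 - X) := by
  have hfin : {s : ℕ | 1 ≤ s ∧ ¬ ∃ k ℓ : ℕ, s = k * b + ℓ * d}.Finite := by
    apply Set.Finite.subset (Set.finite_Iio (b * d))
    rintro n ⟨h1, hnr⟩
    by_contra hc
    exact hnr (rep_of_ge b d hb hd hbd n (by simpa [Set.mem_Iio] using hc))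
  refine ⟨hfin, ?_⟩
  -- key finset identity
  have hset : hfin.toFinset ∪ (range d).image (fun k => b * k) =
      range d ∪ hfin.toFinset.image (· + d) := by
    ext n
    simp only [Finset.mem_union, Finset.mem_image, Finset.mem_range,
      Set.Finite.mem_toFinset, Set.mem_setOf_eq]
    exact mem_iff b d hb hd hbd n
  have hdisj1 : Disjoint hfin.toFinset ((range d).image (fun k => b * k)) := by
    rw [Finset.disjoint_left]
    rintro n hn hn'
    simp only [Finset.mem_image, Finset.mem_range] at hn'
    obtain ⟨k, _, rfl⟩ := hn'
    rw [Set.Finite.mem_toFinset] at hn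
    exact hn.2 ⟨k, 0, by ring⟩
  have hdisj2 : Disjoint (range d) (hfin.toFinset.image (· + d)) := by
    rw [Finset.disjoint_left]
    rintro n hn hn'
    simp only [Finset.mem_image] at hn'
    obtain ⟨s, _, rfl⟩ := hn'
    simp only [Finset.mem_range] at hn
    omega
  set S : Polynomial ℤ := ∑ s ∈ hfin.toFinset, X ^ s with hS
  have hkey : S + ∑ k ∈ range d, (X : Polynomial ℤ) ^ (b * k) =
      (∑ j ∈ range d, X ^ j) + S * X ^ d := by
    have e1 : ∑ k ∈ range d, (X : Polynomial ℤ) ^ (b * k) =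
        ∑ n ∈ (range d).image (fun k => b * k), X ^ n := by
      rw [Finset.sum_image]
      intro x _ y _ h
      exact Nat.eq_of_mul_eq_mul_left (by omega) h
    have e2 : S * X ^ d = ∑ n ∈ hfin.toFinset.image (· + d), (X : Polynomial ℤ) ^ n := by
      rw [Finset.sum_image (by intro x _ y _ h; simp only at h; omega), hS, Finset.sum_mul]
      exact Finset.sum_congr rfl fun s _ => (pow_add X s d).symm
    rw [e1, e2, ← Finset.sum_union hdisj1, ← Finset.sum_union hdisj2, hset]
  have g1 : (∑ j ∈ range d, (X : Polynomial ℤ) ^ j) * (X - 1) = X ^ d - 1 := geom_sum_mul X d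
  have g2 : (∑ k ∈ range d, (X : Polynomial ℤ) ^ (b * k)) * (X ^ b - 1) = X ^ (b * d) - 1 := by
    have : ∀ k, (X : Polynomial ℤ) ^ (b * k) = (X ^ b) ^ k := fun k => by
      rw [← pow_mul]
    simp_rw [this]
    rw [geom_sum_mul, ← pow_mul]
  linear_combination (1 - (X : Polynomial ℤ) ^ b) * (X - 1) * hkey +
    (1 - (X : Polynomial ℤ) ^ b) * g1 + ((X : Polynomial ℤ) - 1) * g2
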